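/- Let G₁ be a finite simple graph with minimum degree 2 and maximum degree Δ₁, let n ≥ 3 be a natural number, and assume G₁ has order n₁ > n with exactly n vertices of degree Δ₁, and that the alliance polynomial A(G₁;x) is symmetric (an even or odd function of x). If n < 2(Δ₁ − (n₁ − n)) and A(G₁;x) is a monic polynomial of degree 2n − n₁ + Δ₁, then A_{2(n−n₁)+Δ₁−2}(G₁) > n. -/
import Mathlib


open Polynomial Finset

/-- Number of neighbors of `v` inside the set `S` (denoted δ_S(v)). -/
def SimpleGraph.degIn {V : Type*} [Fintype V] [DecidableEq V]
    (G : SimpleGraph V) [DecidableRel G.Adj] (S : Finset V) (v : V) : ℕ :=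
  (S.filter (fun u => G.Adj v u)).card

/-- Number of neighbors of `v` outside the set `S` (denoted δ_{S̄}(v)). -/
def SimpleGraph.degOut {V : Type*} [Fintype V] [DecidableEq V]
    (G : SimpleGraph V) [DecidableRel G.Adj] (S : Finset V) (v : V) : ℕ :=
  (Sᶜ.filter (fun u => G.Adj v u)).card

/-- `S` is an exact defensive `k`-alliance in `G`: the induced subgraph `⟨S⟩` is connected
(in particular `S` is nonempty) and `k = k_S = min_{v ∈ S} (δ_S(v) - δ_{S̄}(v))`. -/
def SimpleGraph.IsExactAlliance {V : Type*} [Fintype V] [DecidableEq V]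
    (G : SimpleGraph V) [DecidableRel G.Adj] (S : Finset V) (k : ℤ) : Prop :=
  (G.induce (S : Set V)).Connected ∧
    (∀ v ∈ S, k ≤ (G.degIn S v : ℤ) - (G.degOut S v : ℤ)) ∧
    (∃ v ∈ S, (G.degIn S v : ℤ) - (G.degOut S v : ℤ) = k)

/-- `A_k(G)`: the number of exact defensive `k`-alliances in `G`. -/
noncomputable def SimpleGraph.allianceCoeff {V : Type*} [Fintype V] [DecidableEq V]
    (G : SimpleGraph V) [DecidableRel G.Adj] (k : ℤ) : ℕ :=
  Set.ncard {S : Finset V | G.IsExactAlliance S k}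

/-- The alliance polynomial `A(G;x) = Σ_{k=-Δ}^{Δ} A_k(G) x^{n+k}`, where `n` is the order and
`Δ` the maximum degree of `G`, regarded as a real polynomial. -/
noncomputable def SimpleGraph.alliancePoly {V : Type*} [Fintype V] [DecidableEq V]
    (G : SimpleGraph V) [DecidableRel G.Adj] : Polynomial ℝ :=
  ∑ k ∈ Finset.Icc (-(G.maxDegree : ℤ)) (G.maxDegree : ℤ),
    (G.allianceCoeff k : ℝ) • X ^ (((Fintype.card V : ℤ) + k).toNat)


section Aux

open Polynomial Finset

variable {V : Type*} [Fintype V] [DecidableEq V] {G : SimpleGraph V} [DecidableRel G.Adj]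

lemma aux_degIn_add_degOut (G : SimpleGraph V) [DecidableRel G.Adj] (S : Finset V) (v : V) :
    G.degIn S v + G.degOut S v = G.degree v := by
  classical
  rw [SimpleGraph.degIn, SimpleGraph.degOut, SimpleGraph.degree,
    SimpleGraph.neighborFinset_eq_filter, ← Finset.card_union_of_disjoint
      (Finset.disjoint_filter_filter disjoint_compl_right), ← Finset.filter_union,
    Finset.union_compl]

lemma aux_coeff_comp_neg (p : ℝ[X]) (j : ℕ) :
    (p.comp (-X)).coeff j = (-1)^j * p.coeff j := by
  induction p using Polynomial.induction_on' with
  | add f g hf hg => simp [Polynomial.add_comp, hf, hg, mul_add]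
  | monomial n a =>
    rw [Polynomial.monomial_comp, neg_pow, ← Polynomial.C_1 (R:=ℝ), ← Polynomial.C_neg,
      ← Polynomial.C_pow, ← mul_assoc, ← Polynomial.C_mul]
    simp only [Polynomial.coeff_C_mul, Polynomial.coeff_X_pow, Polynomial.coeff_monomial]
    by_cases h : n = j
    · subst h; simp; ring
    · simp [h, Ne.symm h]

/-- Every nonempty connected set has an exact alliance value. -/
lemma aux_exists_exact {S : Finset V} (hconn : (G.induce (S : Set V)).Connected)
    (hne : S.Nonempty) : ∃ k, G.IsExactAlliance S k := by
  classical
  set f : V → ℤ := fun v => (G.degIn S v : ℤ) - (G.degOut S v : ℤ) with hf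
  refine ⟨(S.image f).min' (hne.image f), hconn, ?_, ?_⟩
  · intro v hv
    exact Finset.min'_le _ _ (Finset.mem_image_of_mem f hv)
  · have := Finset.min'_mem (S.image f) (hne.image f)
    simpa using this

/-- Alliance values lie in `[-Δ, Δ]`. -/
lemma aux_k_bounds {S : Finset V} {k : ℤ} (h : G.IsExactAlliance S k) :
    -(G.maxDegree : ℤ) ≤ k ∧ k ≤ (G.maxDegree : ℤ) := by
  obtain ⟨v, hv, hveq⟩ := h.2.2
  have hsum := aux_degIn_add_degOut G S v
  have hdle := G.degree_le_maxDegree v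
  omega

lemma aux_allianceCoeff_ne_zero {S : Finset V} {k : ℤ} (h : G.IsExactAlliance S k) :
    G.allianceCoeff k ≠ 0 := by
  intro h0
  rw [SimpleGraph.allianceCoeff, Set.ncard_eq_zero (Set.toFinite _)] at h0
  exact absurd (h0 ▸ h : (S : Finset V) ∈ (∅ : Set (Finset V))) (by simp)

/-- Coefficient extraction for the alliance polynomial. -/
lemma aux_coeff_eq [Nonempty V] (G : SimpleGraph V) [DecidableRel G.Adj] {k : ℤ}
    (hk1 : -(G.maxDegree : ℤ) ≤ k) (hk2 : k ≤ (G.maxDegree : ℤ)) :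
    G.alliancePoly.coeff (((Fintype.card V : ℤ) + k).toNat) = (G.allianceCoeff k : ℝ) := by
  classical
  have hDlt : G.maxDegree < Fintype.card V := G.maxDegree_lt_card_verts
  rw [SimpleGraph.alliancePoly, Polynomial.finset_sum_coeff]
  rw [Finset.sum_eq_single_of_mem k (by rw [Finset.mem_Icc]; exact ⟨hk1, hk2⟩)]
  · rw [Polynomial.coeff_smul, Polynomial.coeff_X_pow, if_pos rfl, smul_eq_mul, mul_one]
  · intro b hb hbk
    rw [Finset.mem_Icc] at hb
    rw [Polynomial.coeff_smul, Polynomial.coeff_X_pow, if_neg, smul_zero]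
    intro heq
    exact hbk (by omega)

/-- If an exact `k`-alliance exists then `n + k ≤ natDegree`. -/
lemma aux_le_natDegree [Nonempty V] {S : Finset V} {k : ℤ} (h : G.IsExactAlliance S k) :
    (Fintype.card V : ℤ) + k ≤ (G.alliancePoly.natDegree : ℤ) := by
  obtain ⟨hk1, hk2⟩ := aux_k_bounds h
  have hco := aux_coeff_eq G hk1 hk2
  have hne : G.alliancePoly.coeff (((Fintype.card V : ℤ) + k).toNat) ≠ 0 := by
    rw [hco]
    exact_mod_cast Nat.cast_ne_zero.mpr (aux_allianceCoeff_ne_zero h)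
  have := Polynomial.le_natDegree_of_ne_zero hne
  have hDlt : G.maxDegree < Fintype.card V := G.maxDegree_lt_card_verts
  omega

/-- Connectivity from common neighbours. -/
lemma aux_connected_of_common {S : Finset V} (hne : S.Nonempty)
    (h : ∀ x ∈ S, ∀ y ∈ S, x ≠ y → ¬ G.Adj x y → ∃ z ∈ S, G.Adj x z ∧ G.Adj z y) :
    (G.induce (S : Set V)).Connected := by
  rw [SimpleGraph.connected_iff]
  refine ⟨?_, ⟨⟨hne.choose, hne.choose_spec⟩⟩⟩
  rintro ⟨x, hx⟩ ⟨y, hy⟩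
  rw [Finset.mem_coe] at hx hy
  rcases eq_or_ne x y with rfl | hxy
  · rfl
  by_cases hadj : G.Adj x y
  · exact SimpleGraph.Adj.reachable (by simpa using hadj)
  obtain ⟨z, hz, hxz, hzy⟩ := h x hx y hy hxy hadj
  exact (SimpleGraph.Adj.reachable (u := (⟨x, hx⟩ : (S : Set V)))
      (v := ⟨z, Finset.mem_coe.mpr hz⟩) (by simpa using hxz)).trans
    (SimpleGraph.Adj.reachable (by simpa using hzy))

/-- Reachability in an induced subgraph gives reachability in the ambient graph. -/
lemma aux_reachable_of_induce {s : Set V} {x y : s}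
    (h : (G.induce s).Reachable x y) : G.Reachable x.1 y.1 :=
  h.map (SimpleGraph.Embedding.induce s).toHom

end Aux

set_option maxHeartbeats 1000000 in
/-- Let `G₁` have minimum degree `2`, order `n₁ > n ≥ 3` with exactly `n`
vertices of maximum degree `Δ₁` and symmetric alliance polynomial. If `n < 2(Δ₁ - (n₁ - n))`
and `A(G₁;x)` is a monic polynomial of degree `2n - n₁ + Δ₁`, then
`A_{2(n-n₁)+Δ₁-2}(G₁) > n`. -/
theorem allianceCoeff_gt_of_monic
    {W : Type*} [Fintype W] [DecidableEq W]
    (G₁ : SimpleGraph W) [DecidableRel G₁.Adj] (n : ℕ) (hn : 3 ≤ n)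
    (hn₁ : n < Fintype.card W)
    (hmin : G₁.minDegree = 2)
    (hmax : (Finset.univ.filter (fun v : W => G₁.degree v = G₁.maxDegree)).card = n)
    (hsym : (∀ x : ℝ, G₁.alliancePoly.eval (-x) = G₁.alliancePoly.eval x) ∨
      (∀ x : ℝ, G₁.alliancePoly.eval (-x) = -G₁.alliancePoly.eval x))
    (hlt : (n : ℤ) < 2 * ((G₁.maxDegree : ℤ) - ((Fintype.card W : ℤ) - (n : ℤ))))
    (hmonic : G₁.alliancePoly.Monic)
    (hdeg : (G₁.alliancePoly.natDegree : ℤ) =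
      2 * (n : ℤ) - (Fintype.card W : ℤ) + (G₁.maxDegree : ℤ)) :
    n < G₁.allianceCoeff
      (2 * ((n : ℤ) - (Fintype.card W : ℤ)) + (G₁.maxDegree : ℤ) - 2) := by
  classical
  obtain ⟨n₁, hn₁def⟩ : ∃ x, Fintype.card W = x := ⟨_, rfl⟩
  obtain ⟨Δ, hΔdef⟩ : ∃ x, G₁.maxDegree = x := ⟨_, rfl⟩
  rw [hn₁def] at hn₁ hlt hdeg ⊢
  rw [hΔdef] at hlt hdeg ⊢
  obtain ⟨U, hUdef⟩ : ∃ x, (Finset.univ.filter (fun v : W => G₁.degree v = G₁.maxDegree)) = x :=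
    ⟨_, rfl⟩
  rw [hUdef] at hmax
  obtain ⟨K, hKdef⟩ : ∃ x, 2*(n:ℤ) - 2*(n₁:ℤ) + (Δ:ℤ) = x := ⟨_, rfl⟩
  have hW : Nonempty W := Fintype.card_pos_iff.mp (by omega)
  have hUcard : U.card = n := hmax
  have hUne : U.Nonempty := Finset.card_pos.mp (by omega)
  have hUcc : U.card + Uᶜ.card = n₁ := by
    rw [← hn₁def]; exact Finset.card_add_card_compl U
  obtain ⟨m, hmdef⟩ : ∃ x, Uᶜ.card = x := ⟨_, rfl⟩
  rw [hmdef] at hUcc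
  have hmn : n + m = n₁ := by omega
  have hm1 : 1 ≤ m := by omega
  have hdegU : ∀ v ∈ U, G₁.degree v = Δ := by
    intro v hv
    rw [← hUdef] at hv
    rw [← hΔdef]
    exact (Finset.mem_filter.mp hv).2
  have hlt' : (n:ℤ) < 2*((Δ:ℤ) - (m:ℤ)) := by
    have : ((n₁:ℕ):ℤ) = (n:ℤ) + (m:ℤ) := by exact_mod_cast congrArg Nat.cast hmn.symm
    omega
  have hdegInU : ∀ v ∈ U, (Δ:ℤ) - (m:ℤ) ≤ (G₁.degIn U v : ℤ) := by
    intro v hv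
    have h1 := aux_degIn_add_degOut G₁ U v
    have h2 : G₁.degOut U v ≤ Uᶜ.card := Finset.card_le_card (Finset.filter_subset _ _)
    have h3 := hdegU v hv
    omega
  have hdegInS : ∀ S : Finset W, S ⊆ U → ∀ v : W,
      (G₁.degIn U v : ℤ) - ((U.card - S.card : ℕ) : ℤ) ≤ (G₁.degIn S v : ℤ) := by
    intro S hS v
    have hsub : U.filter (fun u => G₁.Adj v u) ⊆ S.filter (fun u => G₁.Adj v u) ∪ (U \ S) := by
      intro z hz
      rw [Finset.mem_filter] at hz
      by_cases hzS : z ∈ S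
      · exact Finset.mem_union_left _ (Finset.mem_filter.mpr ⟨hzS, hz.2⟩)
      · exact Finset.mem_union_right _ (Finset.mem_sdiff.mpr ⟨hz.1, hzS⟩)
    have h1 := Finset.card_le_card hsub
    have h2 := Finset.card_union_le (S.filter (fun u => G₁.Adj v u)) (U \ S)
    have h3 : (U \ S).card = U.card - S.card := Finset.card_sdiff_of_subset hS
    have h4 := Finset.card_le_card hS
    simp only [SimpleGraph.degIn]
    omega
  have hconnS : ∀ S : Finset W, S ⊆ U → S.Nonempty → U.card ≤ S.card + 2 →
      (G₁.induce (S : Set W)).Connected := by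
    intro S hS hne hc2
    apply aux_connected_of_common hne
    intro x hx y hy hxy hnadj
    by_contra hno
    push_neg at hno
    have hdisj : Disjoint (S.filter (fun u => G₁.Adj x u)) (S.filter (fun u => G₁.Adj y u)) := by
      rw [Finset.disjoint_left]
      intro z hzA hzB
      rw [Finset.mem_filter] at hzA hzB
      exact hno z hzA.1 hzA.2 hzB.2.symm
    have hsub2 : (S.filter (fun u => G₁.Adj x u)) ∪ (S.filter (fun u => G₁.Adj y u))
        ⊆ (S.erase x).erase y := by
      intro z hz
      rw [Finset.mem_union, Finset.mem_filter, Finset.mem_filter] at hz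
      have hzS : z ∈ S := by rcases hz with h | h <;> exact h.1
      have hzx : z ≠ x := by
        rintro rfl
        rcases hz with h | h
        · exact G₁.irrefl h.2
        · exact hnadj h.2.symm
      have hzy : z ≠ y := by
        rintro rfl
        rcases hz with h | h
        · exact hnadj h.2
        · exact G₁.irrefl h.2
      exact Finset.mem_erase.mpr ⟨hzy, Finset.mem_erase.mpr ⟨hzx, hzS⟩⟩
    have hcard2 := Finset.card_le_card hsub2
    rw [Finset.card_union_of_disjoint hdisj] at hcard2
    have hey : ((S.erase x).erase y).card = S.card - 2 := by
      rw [Finset.card_erase_of_mem (Finset.mem_erase.mpr ⟨hxy.symm, hy⟩),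
        Finset.card_erase_of_mem hx]
      omega
    have hxU : x ∈ U := hS hx
    have hyU : y ∈ U := hS hy
    have hx1 := hdegInS S hS x
    have hx2 := hdegInU x hxU
    have hy1 := hdegInS S hS y
    have hy2 := hdegInU y hyU
    have hcx : G₁.degIn S x = (S.filter (fun u => G₁.Adj x u)).card := rfl
    have hcy : G₁.degIn S y = (S.filter (fun u => G₁.Adj y u)).card := rfl
    have hSle := Finset.card_le_card hS
    have h2S : 2 ≤ S.card := by
      have hsub3 : ({x, y} : Finset W) ⊆ S := by
        intro z hz
        simp only [Finset.mem_insert, Finset.mem_singleton] at hz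
        rcases hz with rfl | rfl <;> assumption
      have hc3 := Finset.card_le_card hsub3
      have hc4 : ({x, y} : Finset W).card = 2 := by
        rw [Finset.card_insert_of_notMem (by simp [hxy]), Finset.card_singleton]
      omega
    have hub2 : ((S.filter (fun u => G₁.Adj x u)).card : ℤ)
        + ((S.filter (fun u => G₁.Adj y u)).card : ℤ) ≤ (S.card : ℤ) - 2 := by omega
    have hbx : (Δ:ℤ) - (m:ℤ) - ((U.card - S.card : ℕ):ℤ)
        ≤ ((S.filter (fun u => G₁.Adj x u)).card : ℤ) := by omega
    have hby : (Δ:ℤ) - (m:ℤ) - ((U.card - S.card : ℕ):ℤ)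
        ≤ ((S.filter (fun u => G₁.Adj y u)).card : ℤ) := by omega
    have ht : ((U.card - S.card : ℕ):ℤ) ≤ 2 := by omega
    have hcS : (S.card:ℤ) = (U.card:ℤ) - ((U.card - S.card : ℕ):ℤ) := by omega
    omega
  -- the set U is an exact K-alliance
  have hconnU : (G₁.induce (U : Set W)).Connected := hconnS U Finset.Subset.rfl hUne (by omega)
  obtain ⟨kU, hkU⟩ := aux_exists_exact hconnU hUne
  have hubound : ∀ {S : Finset W} {k : ℤ}, G₁.IsExactAlliance S k → (n₁:ℤ) + k ≤ (n₁:ℤ) + K := by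
    intro S k h
    have h1 := aux_le_natDegree h
    omega
  have hvalU : ∀ v ∈ U, (G₁.degIn U v : ℤ) - (G₁.degOut U v : ℤ) =
      2 * (G₁.degIn U v : ℤ) - (Δ:ℤ) := by
    intro v hv
    have h1 := aux_degIn_add_degOut G₁ U v
    have h2 := hdegU v hv
    omega
  have hkUK : kU = K := by
    obtain ⟨v, hv, hveq⟩ := hkU.2.2
    have h1 := hvalU v hv
    have h2 := hdegInU v hv
    have h3 := hubound hkU
    omega
  rw [hkUK] at hkU
  -- A_K = 1 and uniqueness
  have hA1 : G₁.allianceCoeff K = 1 := by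
    obtain ⟨hb1, hb2⟩ := aux_k_bounds hkU
    have hco := aux_coeff_eq G₁ hb1 hb2
    have hDlt := G₁.maxDegree_lt_card_verts
    rw [hn₁def] at hco
    have hdn : (((n₁:ℕ):ℤ) + K).toNat = G₁.alliancePoly.natDegree := by omega
    rw [hdn] at hco
    have hlc : G₁.alliancePoly.coeff G₁.alliancePoly.natDegree = 1 := hmonic.coeff_natDegree
    rw [hlc] at hco
    exact_mod_cast hco.symm
  have huniq : ∀ S : Finset W, G₁.IsExactAlliance S K → S = U := by
    obtain ⟨a, ha⟩ := Set.ncard_eq_one.mp hA1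
    intro S hS
    have h1 : S ∈ {T : Finset W | G₁.IsExactAlliance T K} := hS
    have h2 : U ∈ {T : Finset W | G₁.IsExactAlliance T K} := hkU
    rw [ha, Set.mem_singleton_iff] at h1 h2
    rw [h1, h2]
  -- full witnesses are adjacent to everything outside U
  have hfull : ∀ u ∈ U, (G₁.degIn U u : ℤ) - (G₁.degOut U u : ℤ) = K →
      ∀ w, w ∉ U → G₁.Adj u w := by
    intro u hu heq w hw
    have h1 := aux_degIn_add_degOut G₁ U u
    have h2 := hdegU u hu
    have hOut : (Uᶜ.filter (fun z => G₁.Adj u z)).card = Uᶜ.card := by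
      have h5 : G₁.degOut U u = m := by omega
      have h6 : G₁.degOut U u = (Uᶜ.filter (fun z => G₁.Adj u z)).card := rfl
      omega
    have hEq : Uᶜ.filter (fun z => G₁.Adj u z) = Uᶜ :=
      Finset.eq_of_subset_of_card_le (Finset.filter_subset _ _) (le_of_eq hOut.symm)
    have hw' : w ∈ Uᶜ := Finset.mem_compl.mpr hw
    rw [← hEq] at hw'
    exact (Finset.mem_filter.mp hw').2
  obtain ⟨u₀, hu₀U, hu₀eq⟩ := hkU.2.2
  have hu₀full : ∀ w, w ∉ U → G₁.Adj u₀ w := hfull u₀ hu₀U hu₀eq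
  -- G₁ is connected
  have hreach : ∀ x : W, G₁.Reachable x u₀ := by
    intro x
    by_cases hx : x ∈ U
    · exact aux_reachable_of_induce
        (hconnU.preconnected ⟨x, Finset.mem_coe.mpr hx⟩ ⟨u₀, Finset.mem_coe.mpr hu₀U⟩)
    · exact (hu₀full x hx).symm.reachable
  have hGconn : G₁.Connected := by
    rw [SimpleGraph.connected_iff]
    exact ⟨fun a b => (hreach a).trans (hreach b).symm, hW⟩
  -- the whole vertex set is an exact 2-alliance
  obtain ⟨v₀, hv₀⟩ := G₁.exists_minimal_degree_vertex
  have hv₀deg : G₁.degree v₀ = 2 := by rw [← hv₀, hmin]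
  have hdegOutUniv : ∀ v : W, G₁.degOut Finset.univ v = 0 := by
    intro v
    simp [SimpleGraph.degOut]
  have hdegInUniv : ∀ v : W, G₁.degIn Finset.univ v = G₁.degree v := by
    intro v
    have := aux_degIn_add_degOut G₁ Finset.univ v
    have := hdegOutUniv v
    omega
  have hVall : G₁.IsExactAlliance Finset.univ 2 := by
    refine ⟨?_, ?_, ⟨v₀, Finset.mem_univ v₀, ?_⟩⟩
    · rw [Finset.coe_univ]
      exact (SimpleGraph.induceUnivIso G₁).connected_iff.mpr hGconn
    · intro v _
      have h1 := hdegInUniv v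
      have h2 := hdegOutUniv v
      have h3 := G₁.minDegree_le_degree v
      rw [hmin] at h3
      omega
    · rw [hdegInUniv v₀, hdegOutUniv v₀, hv₀deg]
      norm_num
  have hK2 : 2 ≤ K := by
    have := hubound hVall
    omega
  have hKne2 : K ≠ 2 := by
    intro h
    have := huniq Finset.univ (h ▸ hVall)
    have hcu : (Finset.univ : Finset W).card = n₁ := by rw [Finset.card_univ, hn₁def]
    rw [this, hUcard] at hcu
    omega
  -- parity : K is even
  have hKeven : K % 2 = 0 := by
    have h2Δ : (2:ℤ) ≤ (G₁.maxDegree:ℤ) := (aux_k_bounds hVall).2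
    have hcoeff2 := aux_coeff_eq G₁ (k := 2) (by omega) h2Δ
    have hA2ne : G₁.allianceCoeff 2 ≠ 0 := aux_allianceCoeff_ne_zero hVall
    rw [hn₁def] at hcoeff2
    set e2 : ℕ := (((n₁:ℕ):ℤ) + 2).toNat with he2
    set d : ℕ := G₁.alliancePoly.natDegree with hdd
    have hc2ne : G₁.alliancePoly.coeff e2 ≠ 0 := by
      rw [hcoeff2]
      exact_mod_cast Nat.cast_ne_zero.mpr hA2ne
    have hcdne : G₁.alliancePoly.coeff d ≠ 0 := by
      rw [hdd, hmonic.coeff_natDegree]; norm_num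
    have hpow : (-1 : ℝ)^e2 = (-1 : ℝ)^d := by
      rcases hsym with hs | hs
      · have hq : G₁.alliancePoly.comp (-X) = G₁.alliancePoly := by
          apply Polynomial.funext
          intro x
          rw [Polynomial.eval_comp]
          simpa using hs x
        have key : ∀ j : ℕ, G₁.alliancePoly.coeff j ≠ 0 → (-1:ℝ)^j = 1 := by
          intro j hj
          have h1 := aux_coeff_comp_neg G₁.alliancePoly j
          rw [hq] at h1
          have h0 : ((-1:ℝ)^j - 1) * G₁.alliancePoly.coeff j = 0 := by linarith
          rcases mul_eq_zero.mp h0 with h | h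
          · linarith
          · exact absurd h hj
        rw [key e2 hc2ne, key d hcdne]
      · have hq : G₁.alliancePoly.comp (-X) = -G₁.alliancePoly := by
          apply Polynomial.funext
          intro x
          rw [Polynomial.eval_comp]
          simpa using hs x
        have key : ∀ j : ℕ, G₁.alliancePoly.coeff j ≠ 0 → (-1:ℝ)^j = -1 := by
          intro j hj
          have h1 := aux_coeff_comp_neg G₁.alliancePoly j
          rw [hq, Polynomial.coeff_neg] at h1
          have h0 : ((-1:ℝ)^j + 1) * G₁.alliancePoly.coeff j = 0 := by linarith
          rcases mul_eq_zero.mp h0 with h | h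
          · linarith
          · exact absurd h hj
        rw [key e2 hc2ne, key d hcdne]
    have hmod : e2 % 2 = d % 2 := by
      rcases Nat.even_or_odd e2 with ha | ha <;> rcases Nat.even_or_odd d with hb | hb
      · rw [Nat.even_iff] at ha hb; omega
      · rw [ha.neg_one_pow, hb.neg_one_pow] at hpow; norm_num at hpow
      · rw [ha.neg_one_pow, hb.neg_one_pow] at hpow; norm_num at hpow
      · rw [Nat.odd_iff] at ha hb; omega
    omega
  have hK4 : 4 ≤ K := by omega
  -- each U.erase u is an exact (K-2)-alliance
  have hval : ∀ S : Finset W, S ⊆ U → ∀ v ∈ S, (G₁.degIn S v : ℤ) - (G₁.degOut S v : ℤ) =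
      2 * (G₁.degIn S v : ℤ) - (Δ:ℤ) := by
    intro S hS v hv
    have h1 := aux_degIn_add_degOut G₁ S v
    have h2 := hdegU v (hS hv)
    omega
  have herase : ∀ u ∈ U, G₁.IsExactAlliance (U.erase u) (K - 2) := by
    intro u hu
    have hS : U.erase u ⊆ U := Finset.erase_subset u U
    have hcard : (U.erase u).card = n - 1 := by rw [Finset.card_erase_of_mem hu, hUcard]
    have hne : (U.erase u).Nonempty := Finset.card_pos.mp (by omega)
    obtain ⟨k', hk'⟩ := aux_exists_exact (hconnS _ hS hne (by omega)) hne
    obtain ⟨v, hv, hveq⟩ := hk'.2.2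
    have h1 := hval _ hS v hv
    have h2 := hdegInS _ hS v
    have h3 := hdegInU v (hS hv)
    have h4 := hubound hk'
    have hcc : ((U.card - (U.erase u).card : ℕ) : ℤ) = 1 := by
      rw [hcard, hUcard]; omega
    rw [hcc] at h2
    have hk'cases : k' = K - 2 ∨ k' = K := by omega
    rcases hk'cases with h | h
    · rwa [h] at hk'
    · exfalso
      have heq2 := huniq _ (h ▸ hk')
      have hu' := hu
      rw [← heq2] at hu'
      exact Finset.notMem_erase u U hu' 
  -- degIn on erase
  have hdegInErase : ∀ (T : Finset W) (u v : W), u ∈ T →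
      (G₁.degIn (T.erase u) v : ℤ) = (G₁.degIn T v : ℤ) - (if G₁.Adj v u then 1 else 0) := by
    intro T u v hu
    have hr1 : G₁.degIn (T.erase u) v = ((T.erase u).filter (fun z => G₁.Adj v z)).card := rfl
    have hr2 : G₁.degIn T v = (T.filter (fun z => G₁.Adj v z)).card := rfl
    rw [hr1, hr2, Finset.filter_erase]
    by_cases h : G₁.Adj v u
    · have hmem : u ∈ T.filter (fun z => G₁.Adj v z) := Finset.mem_filter.mpr ⟨hu, h⟩
      rw [if_pos h, Finset.card_erase_of_mem hmem]
      have h1c : 1 ≤ (T.filter (fun z => G₁.Adj v z)).card := Finset.card_pos.mpr ⟨u, hmem⟩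
      omega
    · rw [if_neg h, Finset.erase_eq_of_notMem (fun hc => h (Finset.mem_filter.mp hc).2)]
      simp
  -- a second full witness u₁
  have hUvalKfull : ∀ v ∈ U, (G₁.degIn U v : ℤ) = (Δ:ℤ) - (m:ℤ) →
      ∀ w, w ∉ U → G₁.Adj v w := by
    intro v hv hdv
    apply hfull v hv
    have h1 := aux_degIn_add_degOut G₁ U v
    have h2 := hdegU v hv
    omega
  obtain ⟨u₁, hu₁S, hu₁eq⟩ := (herase u₀ hu₀U).2.2
  have hu₁U : u₁ ∈ U := Finset.mem_of_mem_erase hu₁S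
  have hu₁ne : u₁ ≠ u₀ := Finset.ne_of_mem_erase hu₁S
  have hu₁full : ∀ w, w ∉ U → G₁.Adj u₁ w := by
    apply hUvalKfull u₁ hu₁U
    have h1 := hval _ (Finset.erase_subset u₀ U) u₁ hu₁S
    have h2 := hdegInErase U u₀ u₁ hu₀U
    have h3 := hdegInU u₁ hu₁U
    have h4 : (G₁.degIn U u₁ : ℤ) ≤ (Δ:ℤ) := by
      have := aux_degIn_add_degOut G₁ U u₁
      have := hdegU u₁ hu₁U
      omega
    by_cases hadj : G₁.Adj u₁ u₀
    · rw [if_pos hadj] at h2; omega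
    · rw [if_neg hadj] at h2; omega
  -- v₀ is outside U
  have hΔbig : (2:ℤ) < (Δ:ℤ) := by omega
  have hv₀U : v₀ ∉ U := by
    intro hc
    have := hdegU v₀ hc
    rw [hv₀deg] at this
    omega
  -- the set S₂ = U \ {u₀, u₁} is an exact (K-2)-alliance
  set S₂ : Finset W := (U.erase u₀).erase u₁ with hS₂def
  have hS₂sub : S₂ ⊆ U := (Finset.erase_subset u₁ (U.erase u₀)).trans (Finset.erase_subset u₀ U)
  have hS₂card : S₂.card = n - 2 := by
    rw [hS₂def, Finset.card_erase_of_mem hu₁S, Finset.card_erase_of_mem hu₀U, hUcard]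
    omega
  have hS₂ne : S₂.Nonempty := Finset.card_pos.mp (by omega)
  have hS₂all : G₁.IsExactAlliance S₂ (K - 2) := by
    obtain ⟨k₂, hk₂⟩ := aux_exists_exact (hconnS _ hS₂sub hS₂ne (by omega)) hS₂ne
    obtain ⟨v, hv, hveq⟩ := hk₂.2.2
    have hvU : v ∈ U := hS₂sub hv
    have h1 := hval _ hS₂sub v hv
    have h2 := hdegInErase (U.erase u₀) u₁ v hu₁S
    rw [← hS₂def] at h2
    have h2' := hdegInErase U u₀ v hu₀U
    have h3 := hdegInU v hvU
    have h4 := hubound hk₂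
    have hKne : k₂ ≠ K := by
      intro h
      have heq2 := huniq _ (h ▸ hk₂)
      have hu' := hu₀U
      rw [← heq2, hS₂def] at hu'
      exact Finset.notMem_erase u₀ U (Finset.mem_of_mem_erase hu')
    have hk₂cases : k₂ = K - 2 ∨ (k₂ = K - 4 ∧ G₁.Adj v u₀ ∧
        G₁.Adj v u₁ ∧ (G₁.degIn U v : ℤ) = (Δ:ℤ) - (m:ℤ)) := by
      by_cases ha0 : G₁.Adj v u₀ <;> by_cases ha1 : G₁.Adj v u₁ <;>
        simp only [ha0, ha1, if_true, if_false, ite_true, ite_false] at h2 h2' <;>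
        first
          | (left; omega)
          | (by_cases hk : k₂ = K - 2
             · exact Or.inl hk
             · right
               refine ⟨by omega, by assumption, by assumption, by omega⟩)
    rcases hk₂cases with h | ⟨hk4, hadj0, hadj1, hdv⟩
    · rwa [h] at hk₂
    · exfalso
      -- v is a third full witness; v₀ then has three neighbours
      have hv' : v ∈ (U.erase u₀).erase u₁ := hv
      have hvne0 : v ≠ u₀ := Finset.ne_of_mem_erase (Finset.mem_of_mem_erase hv')
      have hvne1 : v ≠ u₁ := Finset.ne_of_mem_erase hv' 
      have hvfull : ∀ w, w ∉ U → G₁.Adj v w := hUvalKfull v hvU hdv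
      have htri : ({u₀, u₁, v} : Finset W) ⊆ G₁.neighborFinset v₀ := by
        intro z hz
        rw [SimpleGraph.mem_neighborFinset]
        simp only [Finset.mem_insert, Finset.mem_singleton] at hz
        rcases hz with rfl | rfl | rfl
        · exact (hu₀full v₀ hv₀U).symm
        · exact (hu₁full v₀ hv₀U).symm
        · exact (hvfull v₀ hv₀U).symm
      have hcard3 : ({u₀, u₁, v} : Finset W).card = 3 := by
        rw [Finset.card_insert_of_notMem (by simp [hu₁ne.symm, hvne0.symm, hvne1.symm]),
          Finset.card_insert_of_notMem (by simp [hvne1.symm]), Finset.card_singleton]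
      have := Finset.card_le_card htri
      rw [hcard3] at this
      rw [← SimpleGraph.card_neighborFinset_eq_degree] at hv₀deg
      omega
  -- counting: at least n+1 exact (K-2)-alliances
  have hsetsub : (↑(insert S₂ (U.image (fun u => U.erase u))) : Set (Finset W)) ⊆
      {S : Finset W | G₁.IsExactAlliance S (K - 2)} := by
    intro S hS
    simp only [Finset.coe_insert, Set.mem_insert_iff, Finset.coe_image, Set.mem_image,
      Finset.mem_coe] at hS
    rcases hS with rfl | ⟨u, hu, rfl⟩
    · exact hS₂all
    · exact herase u hu
  have himgcard : (U.image (fun u => U.erase u)).card = n := by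
    rw [Finset.card_image_of_injOn, hUcard]
    intro a ha b hb hab
    have hab' : U.erase a = U.erase b := hab
    by_contra hne
    have hmem2 : a ∈ U.erase b := Finset.mem_erase.mpr ⟨hne, ha⟩
    rw [← hab'] at hmem2
    exact Finset.notMem_erase a U hmem2
  have hS₂notmem : S₂ ∉ U.image (fun u => U.erase u) := by
    intro hc
    obtain ⟨u, hu, heq⟩ := Finset.mem_image.mp hc
    have h1 : (U.erase u).card = n - 1 := by rw [Finset.card_erase_of_mem hu, hUcard]
    rw [heq, hS₂card] at h1
    omega
  have hFcard : (insert S₂ (U.image (fun u => U.erase u))).card = n + 1 := by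
    rw [Finset.card_insert_of_notMem hS₂notmem, himgcard]
  have hfinal : n + 1 ≤ G₁.allianceCoeff (K - 2) := by
    rw [SimpleGraph.allianceCoeff]
    calc n + 1 = (insert S₂ (U.image (fun u => U.erase u))).card := hFcard.symm
    _ = (↑(insert S₂ (U.image (fun u => U.erase u))) : Set (Finset W)).ncard :=
        (Set.ncard_coe_finset _).symm
    _ ≤ _ := Set.ncard_le_ncard hsetsub (Set.toFinite _)
  have hidx : 2 * ((n : ℤ) - ((n₁:ℕ) : ℤ)) + ((Δ:ℕ) : ℤ) - 2 = K - 2 := by omega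
  rw [hidx]
  omega
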